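/- A formula φ(x;y) is an equation for a complete theory T if and only if there is no model M of T and no sequence (a_i, b_i)_{i∈ℕ} in M such that M ⊨ φ(a_i, b_j) for all i < j and M ⊭ φ(a_i, b_i) for all i. -/

import Mathlib

open FirstOrder FirstOrder.Language Set

universe u v w

namespace Equationality

variable {L : FirstOrder.Language.{u, v}}

section Struc
variable {M : Type w} [L.Structure M]

/-- The instance of the formula `φ(x; y)` at the parameter tuple `b`. -/
def instSet {α β : Type*} (φ : L.Formula (α ⊕ β)) (b : β → M) : Set (α → M) :=
  {a | φ.Realize (Sum.elim a b)}

/-- A sequence of `γ`-tuples indexed by a linear order is indiscernible if any two strictly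
increasing finite subsequences satisfy the same formulas. -/
def IsIndiscernible {I : Type*} [LinearOrder I] {γ : Type*} (a : I → γ → M) : Prop :=
  ∀ (n : ℕ) (i j : Fin n → I), StrictMono i → StrictMono j →
    ∀ φ : L.Formula (Fin n × γ),
      φ.Realize (fun p => a (i p.1) p.2) ↔ φ.Realize (fun p => a (j p.1) p.2)

/-- The complete type of a tuple over `∅`, as the set of formulas it realizes. -/
def typeOf {γ : Type*} (a : γ → M) : Set (L.Formula γ) := {φ | φ.Realize a}

end Struc

variable (T : L.Theory)

/-- `φ(x; y)` is an equation for `T`: in every model of `T`, the family of finite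
intersections of instances of `φ` has the descending chain condition. -/
def IsEquation {α β : Type*} (φ : L.Formula (α ⊕ β)) : Prop :=
  ∀ (M : Theory.ModelType.{u, v, max u v} T) (B : ℕ → Finset (β → M)),
    (Antitone fun n => ⋂ b ∈ B n, instSet φ b) →
    ∃ N, ∀ n, N ≤ n → (⋂ b ∈ B n, instSet φ b) = ⋂ b ∈ B N, instSet φ b

/-- A complete type over `∅` (in the variables `γ`), presented as the set of formulas
realized by some tuple in some model of `T`. -/
def IsRealizedType {γ : Type*} (p : Set (L.Formula γ)) : Prop :=
  ∃ (M : Theory.ModelType.{u, v, max u v} T) (a : γ → M), typeOf a = p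

/-- `p ⟶ q`: there are a model of `T`, a tuple `b` and an indiscernible sequence `(aᵢ)`
with `aᵢ ⊨ p(x, b)` for `i > 0` and `a₀ ⊨ q(x, b)`. -/
def Pf {α β : Type*} (p q : Set (L.Formula (α ⊕ β))) : Prop :=
  ∃ (M : Theory.ModelType.{u, v, max u v} T) (b : β → M) (a : ℕ → α → M),
    IsIndiscernible (L := L) a ∧ (∀ i : ℕ, 0 < i → typeOf (Sum.elim (a i) b) = p) ∧
      typeOf (Sum.elim (a 0) b) = q

/-- An ultrapower of a model of `T`, with the sequences `(a (n-i))ᵢ`, `(b (n-j))ⱼ`. -/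
lemma ultrapower_shift {α β : Type (max u v)} (φ : L.Formula (α ⊕ β))
    (M : Theory.ModelType.{u, v, max u v} T) (a : ℕ → α → M) (b : ℕ → β → M) :
    ∃ (M' : Theory.ModelType.{u, v, max u v} T) (a' : ℕ → α → M') (b' : ℕ → β → M'),
      ∀ i j : ℕ, φ.Realize (Sum.elim (a' i) (b' j)) ↔
        ∀ᶠ n in (Filter.hyperfilter ℕ : Filter ℕ),
          φ.Realize (Sum.elim (a (n - i)) (b (n - j))) := by
  classical
  let u : Ultrafilter ℕ := Filter.hyperfilter ℕ
  let C : Type (max u v) := (u : Filter ℕ).Product (fun _ : ℕ => (M : Type (max u v)))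
  haveI : T.Model C := by
    rw [Theory.model_iff]
    intro ψ hψ
    rw [Ultraproduct.sentence_realize]
    exact Filter.Eventually.of_forall fun _ => M.is_model.realize_of_mem ψ hψ
  refine ⟨⟨C⟩, fun i p => (↑(fun n : ℕ => a (n - i) p) : C),
    fun j q => (↑(fun n : ℕ => b (n - j) q) : C), fun i j => ?_⟩
  have key : (Sum.elim (fun p => (↑(fun n : ℕ => a (n - i) p) : C))
      (fun q => (↑(fun n : ℕ => b (n - j) q) : C)))
      = fun s : α ⊕ β => ((Sum.elim (fun p (n : ℕ) => a (n - i) p)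
        (fun q (n : ℕ) => b (n - j) q) s : ∀ _ : ℕ, M) : C) := by
    funext s; cases s <;> rfl
  show φ.Realize (Sum.elim (fun p => (↑(fun n : ℕ => a (n - i) p) : C))
      (fun q => (↑(fun n : ℕ => b (n - j) q) : C))) ↔ _
  rw [key, Ultraproduct.realize_formula_cast]
  refine Filter.eventually_congr (Filter.Eventually.of_forall fun n => ?_)
  have : (fun s : α ⊕ β => Sum.elim (fun p (n : ℕ) => a (n - i) p)
      (fun q (n : ℕ) => b (n - j) q) s n) = Sum.elim (a (n - i)) (b (n - j)) := by
    funext s; cases s <;> rfl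
  rw [this]

/-- Reversal of the order of a pattern, via an ultrapower. -/
lemma reverse_pattern {α β : Type (max u v)} (φ : L.Formula (α ⊕ β))
    (M : Theory.ModelType.{u, v, max u v} T) (a : ℕ → α → M) (b : ℕ → β → M)
    (h1 : ∀ i j : ℕ, j < i → φ.Realize (Sum.elim (a i) (b j)))
    (h2 : ∀ i : ℕ, ¬ φ.Realize (Sum.elim (a i) (b i))) :
    ∃ (M' : Theory.ModelType.{u, v, max u v} T) (a' : ℕ → α → M') (b' : ℕ → β → M'),
      (∀ i j : ℕ, i < j → φ.Realize (Sum.elim (a' i) (b' j))) ∧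
        ∀ i : ℕ, ¬ φ.Realize (Sum.elim (a' i) (b' i)) := by
  obtain ⟨M', a', b', hM'⟩ := ultrapower_shift T φ M a b
  refine ⟨M', a', b', fun i j hij => ?_, fun i hi => ?_⟩
  · rw [hM']
    refine Nat.hyperfilter_le_atTop (Filter.eventually_atTop.2 ⟨j, fun n hn => ?_⟩)
    exact h1 _ _ (by omega)
  · rw [hM' i i] at hi
    obtain ⟨n, hn⟩ := hi.exists
    exact h2 _ hn

/-- Reversal in the other direction. -/
lemma reverse_pattern' {α β : Type (max u v)} (φ : L.Formula (α ⊕ β))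
    (M : Theory.ModelType.{u, v, max u v} T) (a : ℕ → α → M) (b : ℕ → β → M)
    (h1 : ∀ i j : ℕ, i < j → φ.Realize (Sum.elim (a i) (b j)))
    (h2 : ∀ i : ℕ, ¬ φ.Realize (Sum.elim (a i) (b i))) :
    ∃ (M' : Theory.ModelType.{u, v, max u v} T) (a' : ℕ → α → M') (b' : ℕ → β → M'),
      (∀ i j : ℕ, j < i → φ.Realize (Sum.elim (a' i) (b' j))) ∧
        ∀ i : ℕ, ¬ φ.Realize (Sum.elim (a' i) (b' i)) := by
  obtain ⟨M', a', b', hM'⟩ := ultrapower_shift T φ M a b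
  refine ⟨M', a', b', fun i j hij => ?_, fun i hi => ?_⟩
  · rw [hM']
    refine Nat.hyperfilter_le_atTop (Filter.eventually_atTop.2 ⟨i, fun n hn => ?_⟩)
    exact h1 _ _ (by omega)
  · rw [hM' i i] at hi
    obtain ⟨n, hn⟩ := hi.exists
    exact h2 _ hn

/-- For a complete theory `T`, a formula `φ(x; y)` is an equation if and only if
there is no model `M` of `T` and no sequence `(aᵢ, bᵢ)_{i ∈ ℕ}` in `M` such that
`M ⊨ φ(aᵢ, bⱼ)` for all `i < j` and `M ⊭ φ(aᵢ, bᵢ)` for all `i`. -/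
theorem isEquation_iff_no_sequence {α β : Type (max u v)} [Finite α] [Finite β]
    (hT : T.IsComplete) (φ : L.Formula (α ⊕ β)) :
    IsEquation T φ ↔
      ¬ ∃ (M : Theory.ModelType.{u, v, max u v} T) (a : ℕ → α → M) (b : ℕ → β → M),
        (∀ i j : ℕ, i < j → φ.Realize (Sum.elim (a i) (b j))) ∧
          ∀ i : ℕ, ¬ φ.Realize (Sum.elim (a i) (b i)) := by
  classical
  constructor
  · rintro hEq ⟨M, a, b, h1, h2⟩
    obtain ⟨M', a', b', h1', h2'⟩ := reverse_pattern' T φ M a b h1 h2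
    set B : ℕ → Finset (β → M') := fun n => (Finset.range n).image b' with hB
    have hanti : Antitone fun n => ⋂ c ∈ B n, instSet φ c := by
      intro n m hnm x hx
      simp only [Set.mem_iInter] at hx ⊢
      intro c hc
      apply hx
      simp only [hB, Finset.mem_image, Finset.mem_range] at hc ⊢
      obtain ⟨k, hk, rfl⟩ := hc
      exact ⟨k, lt_of_lt_of_le hk hnm, rfl⟩
    obtain ⟨N, hN⟩ := hEq M' B hanti
    have hmem : a' N ∈ ⋂ c ∈ B N, instSet φ c := by
      simp only [Set.mem_iInter]
      intro c hc
      simp only [hB, Finset.mem_image, Finset.mem_range] at hc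
      obtain ⟨k, hk, rfl⟩ := hc
      exact h1' N k hk
    rw [← hN (N + 1) (Nat.le_succ N)] at hmem
    have : a' N ∈ instSet φ (b' N) := by
      simp only [Set.mem_iInter] at hmem
      exact hmem (b' N) (by
        simp only [hB, Finset.mem_image, Finset.mem_range]
        exact ⟨N, Nat.lt_succ_self N, rfl⟩)
    exact h2' N this
  · intro hno M B hanti
    by_contra hcon
    push_neg at hcon
    set X : ℕ → Set (α → M) := fun n => ⋂ c ∈ B n, instSet φ c with hX
    have hstep : ∀ N, ∃ n, N < n ∧ X n ⊂ X N := by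
      intro N
      obtain ⟨n, hn, hne⟩ := hcon N
      refine ⟨n, lt_of_le_of_ne hn ?_, lt_of_le_of_ne (hanti hn) hne⟩
      rintro rfl; exact hne rfl
    choose f hf1 hf2 using hstep
    let g : ℕ → ℕ := fun k => Nat.rec 0 (fun _ m => f m) k
    have hg : ∀ k, g (k + 1) = f (g k) := fun k => rfl
    have hgmono : StrictMono g :=
      strictMono_nat_of_lt_succ fun k => by rw [hg]; exact hf1 (g k)
    have hXg : ∀ k, X (g (k + 1)) ⊂ X (g k) := fun k => by rw [hg]; exact hf2 (g k)
    choose A hA1 hA2 using fun k => Set.exists_of_ssubset (hXg k)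
    have hpickb : ∀ k, ∃ c ∈ B (g (k + 1)), A k ∉ instSet φ c := by
      intro k
      by_contra h
      push_neg at h
      exact hA2 k (Set.mem_iInter₂.2 h)
    choose bb hbb1 hbb2 using hpickb
    have hpat : ∀ i j : ℕ, j < i → φ.Realize (Sum.elim (A i) (bb j)) := by
      intro i j hji
      have hsub : X (g i) ⊆ X (g (j + 1)) := hanti (hgmono.monotone (Nat.succ_le_of_lt hji))
      exact Set.mem_iInter₂.1 (hsub (hA1 i)) (bb j) (hbb1 j)
    obtain ⟨M', a', b', h1', h2'⟩ := reverse_pattern T φ M A bb hpat (fun i => hbb2 i)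
    exact hno ⟨M', a', b', h1', h2'⟩

end Equationality
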